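/- For every tree T with at least two edges and every t ≥ 4, the graph Γ that is a disjoint union of cliques each of size ⌊t/4⌋ is (1/2, t)-sparse, and Γ itself contains no induced copy of T. Hence the bound Θ(tn) edges in the induced-tree Turán theorem for (c,t)-sparse host graphs is tight up to the constant factor. -/

import Mathlib

open scoped Classical
open Finset SimpleGraph

/-- A graph is `(c,t)`-sparse if any two vertex subsets of size at least `t` have
edge density (counting ordered pairs) at most `1 - c`. -/
def Sparse {V : Type*} [Fintype V] (Γ : SimpleGraph V) (c : ℝ) (t : ℕ) : Prop :=
  ∀ A B : Finset V, t ≤ A.card → t ≤ B.card →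
    (((A ×ˢ B).filter fun p => Γ.Adj p.1 p.2).card : ℝ) ≤ (1 - c) * A.card * B.card

theorem stmt_14 {ι VT : Type*} [Fintype ι] [Fintype VT]
    (T : SimpleGraph VT) (hconn : T.Connected) (hacyc : T.IsAcyclic)
    (hT : 2 ≤ T.edgeFinset.card) (t : ℕ) (ht : 4 ≤ t) :
    Sparse (SimpleGraph.fromRel fun x y : ι × Fin (t / 4) => x.1 = y.1) (1/2) t ∧
    IsEmpty (T ↪g SimpleGraph.fromRel fun x y : ι × Fin (t / 4) => x.1 = y.1) := by
  set m := t / 4 with hm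
  set Γ := SimpleGraph.fromRel fun x y : ι × Fin m => x.1 = y.1 with hΓ
  have hAdj : ∀ a b : ι × Fin m, Γ.Adj a b → a.1 = b.1 := by
    intro a b hab
    rcases hab with ⟨-, h | h⟩
    · exact h
    · exact h.symm
  constructor
  · intro A B hA hB
    have key : ∀ a : ι × Fin m, (B.filter fun b => Γ.Adj a b).card ≤ m := by
      intro a
      have hsub : (B.filter fun b => Γ.Adj a b) ⊆
          (Finset.univ : Finset (Fin m)).image (fun j => (a.1, j)) := by
        intro b hb
        simp only [Finset.mem_filter] at hb
        have h1 := hAdj a b hb.2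
        simp only [Finset.mem_image, Finset.mem_univ, true_and]
        exact ⟨b.2, by rw [h1]⟩
      calc (B.filter fun b => Γ.Adj a b).card
          ≤ ((Finset.univ : Finset (Fin m)).image (fun j => (a.1, j))).card :=
            Finset.card_le_card hsub
        _ ≤ (Finset.univ : Finset (Fin m)).card := Finset.card_image_le
        _ = m := Finset.card_univ.trans (Fintype.card_fin m)
    have hsub2 : (A ×ˢ B).filter (fun p => Γ.Adj p.1 p.2) ⊆
        A.biUnion (fun a => (B.filter fun b => Γ.Adj a b).image (Prod.mk a)) := by
      intro p hp
      simp only [Finset.mem_filter, Finset.mem_product] at hp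
      simp only [Finset.mem_biUnion, Finset.mem_image, Finset.mem_filter]
      exact ⟨p.1, hp.1.1, p.2, ⟨hp.1.2, hp.2⟩, rfl⟩
    have hcount : ((A ×ˢ B).filter (fun p => Γ.Adj p.1 p.2)).card ≤ A.card * m := by
      calc ((A ×ˢ B).filter (fun p => Γ.Adj p.1 p.2)).card
          ≤ (A.biUnion (fun a => (B.filter fun b => Γ.Adj a b).image (Prod.mk a))).card :=
            Finset.card_le_card hsub2
        _ ≤ ∑ a ∈ A, ((B.filter fun b => Γ.Adj a b).image (Prod.mk a)).card :=
            Finset.card_biUnion_le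
        _ ≤ ∑ a ∈ A, m := Finset.sum_le_sum fun a _ =>
            le_trans Finset.card_image_le (key a)
        _ = A.card * m := by rw [Finset.sum_const, smul_eq_mul]
    have h1 : ((((A ×ˢ B).filter fun p => Γ.Adj p.1 p.2).card : ℕ) : ℝ)
        ≤ (A.card : ℝ) * m := by exact_mod_cast hcount
    have h2 : (m : ℝ) ≤ (t : ℝ) / 4 := by
      rw [hm]; exact_mod_cast Nat.cast_div_le
    have h3 : (t : ℝ) ≤ (B.card : ℝ) := by exact_mod_cast hB
    have hA0 : (0 : ℝ) ≤ (A.card : ℝ) := Nat.cast_nonneg _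
    calc _ ≤ (A.card : ℝ) * m := by convert h1
      _ ≤ _ := by nlinarith [h1, h2, h3, hA0, mul_nonneg hA0 (sub_nonneg.mpr h2), mul_nonneg hA0 (sub_nonneg.mpr h3), mul_nonneg hA0 (Nat.cast_nonneg (α := ℝ) t)]
  · refine ⟨fun f => ?_⟩
    have htree : T.IsTree := ⟨hconn, hacyc⟩
    have hcard : T.edgeFinset.card + 1 = Fintype.card VT := htree.card_edgeFinset
    have hdeg : ∃ b, 2 ≤ T.degree b := by
      by_contra h
      push_neg at h
      have hsum : ∑ v, T.degree v = 2 * T.edgeFinset.card :=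
        T.sum_degrees_eq_twice_card_edges
      have hle : ∑ v, T.degree v ≤ Fintype.card VT := by
        calc ∑ v, T.degree v ≤ ∑ _v : VT, 1 :=
              Finset.sum_le_sum (fun v _ => Nat.lt_succ_iff.mp (h v))
          _ = Fintype.card VT := by simp
      omega
    obtain ⟨b, hb⟩ := hdeg
    rw [← SimpleGraph.card_neighborFinset_eq_degree] at hb
    obtain ⟨a, ha, c, hc, hac⟩ := Finset.one_lt_card.mp hb
    rw [SimpleGraph.mem_neighborFinset] at ha hc
    have hnadj : ¬ T.Adj a c := by
      intro hadj
      have hpath2 : (SimpleGraph.Walk.cons ha.symm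
          (SimpleGraph.Walk.cons hc SimpleGraph.Walk.nil) : T.Walk a c).IsPath := by
        simp [SimpleGraph.Walk.isPath_def, ha.ne', hadj.ne, hc.ne]
      have heq := SimpleGraph.isAcyclic_iff_path_unique.mp hacyc
        (SimpleGraph.Path.singleton hadj) ⟨_, hpath2⟩
      have := congrArg (fun q : T.Path a c => q.1.length) heq
      simp [SimpleGraph.Path.singleton] at this
    have h1 : Γ.Adj (f b) (f a) := f.map_rel_iff.mpr ha
    have h2 : Γ.Adj (f b) (f c) := f.map_rel_iff.mpr hc
    have e1 : (f b).1 = (f a).1 := hAdj _ _ h1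
    have e2 : (f b).1 = (f c).1 := hAdj _ _ h2
    have hne : f a ≠ f c := fun h => hac (f.injective h)
    have hadj : Γ.Adj (f a) (f c) :=
      (SimpleGraph.fromRel_adj _ _ _).mpr ⟨hne, Or.inl (e1.symm.trans e2)⟩
    exact hnadj (f.map_rel_iff.mp hadj)
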